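/- Let E be a real normed vector space, s ⊆ E an open connected set, Ξ : E → Matrix (Fin 3) (Fin 3) ℝ differentiable at every point of s with Ξ(x) invertible for all x ∈ s, and H : E → Matrix (Fin 3) (Fin 3) ℝ differentiable at every point of s. Suppose that for all x ∈ s and v ∈ E: fderiv H x v + ϑ(x)(v)·H(x) + H(x)·(ϑ(x)(v))ᵀ = 0, where ϑ(x)(v) = Ξ(x)⁻¹ · (fderiv Ξ x v). Then the map x ↦ Ξ(x)·H(x)·Ξ(x)ᵀ is constant on s; equivalently, H(x) = Ξ(x)⁻¹·C·(Ξ(x)⁻¹)ᵀ on s for the constant matrix C = Ξ(x₀)·H(x₀)·Ξ(x₀)ᵀ, any x₀ ∈ s. (This shows every solution of Liouville's system dH + ϑH + Hϑᵗ = 0 is of the form H = Ξ⁻¹·C·(Ξ⁻¹)ᵀ.) -/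

import Mathlib

open Matrix

attribute [local instance] Matrix.normedAddCommGroup Matrix.normedSpace

noncomputable abbrev M3 := Matrix (Fin 3) (Fin 3) ℝ

noncomputable abbrev M3topo : TopologicalSpace M3 :=
  (inferInstance : NormedAddCommGroup M3).toPseudoMetricSpace.toUniformSpace.toTopologicalSpace

noncomputable abbrev M3acg : AddCommGroup M3 :=
  (inferInstance : NormedAddCommGroup M3).toAddCommGroup

noncomputable abbrev M3mod : Module ℝ M3 :=
  (inferInstance : NormedSpace ℝ M3).toModule

section

attribute [local instance] M3topo M3acg M3mod

/-- Matrix multiplication as a continuous bilinear map (via finite dimensionality). -/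
noncomputable def mulCLM : M3 →L[ℝ] M3 →L[ℝ] M3 :=
  LinearMap.toContinuousLinearMap
    ((LinearMap.toContinuousLinearMap : (M3 →ₗ[ℝ] M3) ≃ₗ[ℝ] (M3 →L[ℝ] M3)).toLinearMap
      ∘ₗ (LinearMap.mul ℝ M3))

@[simp] lemma mulCLM_apply (A B : M3) : mulCLM A B = A * B := rfl

/-- Transpose as a continuous linear map. -/
noncomputable def transCLM : M3 →L[ℝ] M3 :=
  LinearMap.toContinuousLinearMap (Matrix.transposeLinearEquiv (Fin 3) (Fin 3) ℝ ℝ).toLinearMap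

@[simp] lemma transCLM_apply (A : M3) : transCLM A = Aᵀ := rfl

theorem hasFDerivAt_matmul {E : Type*} [NormedAddCommGroup E] [NormedSpace ℝ E]
    {f g : E → M3} {f' g' : E →L[ℝ] M3} {x : E}
    (hf : HasFDerivAt f f' x) (hg : HasFDerivAt g g' x) :
    HasFDerivAt (fun y => f y * g y)
      ((mulCLM.flip (g x)).comp f' + (mulCLM (f x)).comp g') x := by
  have hc : HasFDerivAt (fun y => mulCLM (f y)) (mulCLM.comp f') x :=
    mulCLM.hasFDerivAt.comp x hf
  have := hc.clm_apply hg
  convert this using 1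
  · exact rfl
  ext v : 1
  simp [mul_comm]
  abel

end

theorem stmt13 (E : Type*) [NormedAddCommGroup E] [NormedSpace ℝ E]
    (s : Set E) (hs : IsOpen s) (hconn : IsConnected s)
    (Ξ : E → Matrix (Fin 3) (Fin 3) ℝ)
    (hΞdiff : ∀ x ∈ s, DifferentiableAt ℝ Ξ x)
    (hΞinv : ∀ x ∈ s, IsUnit (Ξ x))
    (H : E → Matrix (Fin 3) (Fin 3) ℝ)
    (hHdiff : ∀ x ∈ s, DifferentiableAt ℝ H x)
    (hLiouville : ∀ x ∈ s, ∀ v : E,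
      fderiv ℝ H x v + ((Ξ x)⁻¹ * fderiv ℝ Ξ x v) * H x
        + H x * ((Ξ x)⁻¹ * fderiv ℝ Ξ x v)ᵀ = 0) :
    ∀ x₀ ∈ s, ∀ x ∈ s,
      Ξ x * H x * (Ξ x)ᵀ = Ξ x₀ * H x₀ * (Ξ x₀)ᵀ ∧
      H x = (Ξ x)⁻¹ * (Ξ x₀ * H x₀ * (Ξ x₀)ᵀ) * ((Ξ x)⁻¹)ᵀ := by
  set F : E → M3 := fun y => Ξ y * H y * (Ξ y)ᵀ with hF
  -- F has zero derivative on s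
  have key : ∀ x ∈ s, HasFDerivAt F (0 : E →L[ℝ] M3) x := by
    intro x hx
    have hdet : IsUnit (Ξ x).det := (Matrix.isUnit_iff_isUnit_det _).mp (hΞinv x hx)
    have hΞi : (Ξ x) * (Ξ x)⁻¹ = 1 := Matrix.mul_nonsing_inv _ hdet
    have hΞi' : (Ξ x)⁻¹ * (Ξ x) = 1 := Matrix.nonsing_inv_mul _ hdet
    have hΞ := (hΞdiff x hx).hasFDerivAt
    have hH := (hHdiff x hx).hasFDerivAt
    have hΞT : HasFDerivAt (fun y => (Ξ y)ᵀ) (transCLM.comp (fderiv ℝ Ξ x)) x :=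
      transCLM.hasFDerivAt.comp x hΞ
    have h1 := hasFDerivAt_matmul hΞ hH
    have h2 := hasFDerivAt_matmul h1 hΞT
    refine h2.congr_fderiv ?_
    symm
    ext v : 1
    have hL := hLiouville x hx v
    have hHv : fderiv ℝ H x v =
        -(((Ξ x)⁻¹ * fderiv ℝ Ξ x v) * H x) - H x * ((Ξ x)⁻¹ * fderiv ℝ Ξ x v)ᵀ := by
      have h := hL
      rw [add_assoc] at h
      rw [eq_neg_of_add_eq_zero_left h, neg_add, ← sub_eq_add_neg]
    have hTi : ((Ξ x)⁻¹)ᵀ * (Ξ x)ᵀ = 1 := by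
      rw [← Matrix.transpose_mul, hΞi, Matrix.transpose_one]
    change (0 : Matrix (Fin 3) (Fin 3) ℝ) =
      (fderiv ℝ Ξ x v * H x + Ξ x * fderiv ℝ H x v) * (Ξ x)ᵀ + Ξ x * H x * (fderiv ℝ Ξ x v)ᵀ
    rw [hHv]
    simp only [Matrix.transpose_mul]
    have key0 : fderiv ℝ Ξ x v * H x * (Ξ x)ᵀ
        - Ξ x * (Ξ x)⁻¹ * (fderiv ℝ Ξ x v * H x * (Ξ x)ᵀ)
        - Ξ x * H x * ((fderiv ℝ Ξ x v)ᵀ * (((Ξ x)⁻¹)ᵀ * (Ξ x)ᵀ))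
        + Ξ x * H x * (fderiv ℝ Ξ x v)ᵀ = 0 := by
      rw [hΞi, hTi, Matrix.one_mul, Matrix.mul_one]
      abel
    rw [← key0]
    noncomm_ring
  -- F is constant on s
  have hconst : ∀ x₀ ∈ s, ∀ x ∈ s, F x = F x₀ := by
    intro x₀ hx₀ x hx
    haveI : PreconnectedSpace s := Subtype.preconnectedSpace hconn.isPreconnected
    have hlc : IsLocallyConstant (fun y : s => F y.1) := by
      rw [IsLocallyConstant.iff_eventually_eq]
      rintro ⟨a, ha⟩
      obtain ⟨r, hr, hball⟩ := Metric.isOpen_iff.mp hs a ha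
      have hb : ∀ y ∈ Metric.ball a r, F y = F a := by
        intro y hy
        refine (convex_ball a r).is_const_of_fderivWithin_eq_zero
          (fun z hz => ((key z (hball hz)).differentiableAt).differentiableWithinAt)
          (fun z hz => ?_) hy (Metric.mem_ball_self hr)
        rw [fderivWithin_of_isOpen Metric.isOpen_ball hz]
        exact (key z (hball hz)).fderiv
      have : Metric.ball a r ∈ nhds a := Metric.ball_mem_nhds a hr
      have hmem : (Subtype.val : s → E) ⁻¹' Metric.ball a r ∈ nhds (⟨a, ha⟩ : s) :=
        continuous_subtype_val.continuousAt.preimage_mem_nhds this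
      filter_upwards [hmem] with y hy
      exact hb y.1 hy
    exact hlc.apply_eq_of_preconnectedSpace ⟨x, hx⟩ ⟨x₀, hx₀⟩
  intro x₀ hx₀ x hx
  have h1 : Ξ x * H x * (Ξ x)ᵀ = Ξ x₀ * H x₀ * (Ξ x₀)ᵀ := hconst x₀ hx₀ x hx
  refine ⟨h1, ?_⟩
  have hdet : IsUnit (Ξ x).det := (Matrix.isUnit_iff_isUnit_det _).mp (hΞinv x hx)
  have hΞi' : (Ξ x)⁻¹ * (Ξ x) = 1 := Matrix.nonsing_inv_mul _ hdet
  have hTi : (Ξ x)ᵀ * ((Ξ x)⁻¹)ᵀ = 1 := by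
    rw [← Matrix.transpose_mul, hΞi', Matrix.transpose_one]
  calc H x = ((Ξ x)⁻¹ * Ξ x) * H x * ((Ξ x)ᵀ * ((Ξ x)⁻¹)ᵀ) := by
        rw [hΞi', hTi, Matrix.one_mul, Matrix.mul_one]
    _ = (Ξ x)⁻¹ * (Ξ x * H x * (Ξ x)ᵀ) * ((Ξ x)⁻¹)ᵀ := by
        simp only [Matrix.mul_assoc]
    _ = (Ξ x)⁻¹ * (Ξ x₀ * H x₀ * (Ξ x₀)ᵀ) * ((Ξ x)⁻¹)ᵀ := by rw [h1]
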